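/- arXiv:1307.2781 — 2 statements merged into one kernel-verified Lean document; each statement's English description precedes it below -/
import Mathlib

section
/- For every measurable function m : ℝ → [0,1], the absolute value of ∫ x·m(x) dγ¹(x) (integral against the standard one-dimensional Gaussian measure γ¹) is at most q(∫ m(x) dγ¹(x)), where q(s) = -∫_{-∞}^{Φ⁻¹(s)} x dγ¹(x) and Φ is the standard Gaussian CDF. -/
open MeasureTheory ProbabilityTheory Real Set Filter
open scoped ENNReal NNReal
set_option maxHeartbeats 1000000

noncomputable def gamma1 : Measure ℝ := gaussianReal 0 1

noncomputable def Phi (t : ℝ) : ℝ :=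
  ∫ s in Set.Iic t, (Real.sqrt (2 * Real.pi))⁻¹ * Real.exp (-s ^ 2 / 2)

noncomputable def Psi : ℝ → ℝ := Function.invFun Phi

/-- q defined via the integral against the standard Gaussian measure. -/
noncomputable def qfun (s : ℝ) : ℝ := -∫ x in Set.Iic (Psi s), x ∂gamma1

noncomputable def Gden (x : ℝ) : ℝ := (Real.sqrt (2 * Real.pi))⁻¹ * Real.exp (-x ^ 2 / 2)

lemma gpdf_eq : gaussianPDFReal 0 1 = Gden := by
  funext x
  simp [gaussianPDFReal, Gden]

lemma Gden_nonneg (x : ℝ) : 0 ≤ Gden x := by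
  unfold Gden; positivity

lemma Gden_cont : Continuous Gden := by
  unfold Gden
  fun_prop

lemma gamma1_eq : gamma1 = volume.withDensity (fun x => ((Gden x).toNNReal : ℝ≥0∞)) := by
  rw [gamma1, gaussianReal_of_var_ne_zero _ one_ne_zero]
  congr 1
  funext x
  rw [gaussianPDF, gpdf_eq, ENNReal.ofReal]

lemma gamma1_setIntegral (f : ℝ → ℝ) {S : Set ℝ} (hS : MeasurableSet S) :
    ∫ x in S, f x ∂gamma1 = ∫ x in S, Gden x * f x := by
  rw [gamma1_eq, setIntegral_withDensity_eq_setIntegral_smul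
    (show Measurable fun x => (Gden x).toNNReal from measurable_real_toNNReal.comp Gden_cont.measurable) f]
  · simp only [NNReal.smul_def, Real.coe_toNNReal _ (Gden_nonneg _), smul_eq_mul]
  · exact hS

lemma gamma1_integral (f : ℝ → ℝ) :
    ∫ x, f x ∂gamma1 = ∫ x, Gden x * f x := by
  rw [gamma1_eq, integral_withDensity_eq_integral_smul
    (show Measurable fun x => (Gden x).toNNReal from measurable_real_toNNReal.comp Gden_cont.measurable) f]
  simp only [NNReal.smul_def, Real.coe_toNNReal _ (Gden_nonneg _), smul_eq_mul]

lemma integrable_id_gamma1 : Integrable (fun x : ℝ => x) gamma1 := by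
  rw [gamma1_eq, integrable_withDensity_iff (by
      exact (measurable_real_toNNReal.comp Gden_cont.measurable).coe_nnreal_ennreal)
      (ae_of_all _ fun x => ENNReal.coe_lt_top)]
  have h : Integrable (fun x : ℝ => x * Real.exp (-(1/2) * x ^ 2)) volume :=
    integrable_mul_exp_neg_mul_sq (by norm_num)
  have := (h.const_mul ((Real.sqrt (2 * Real.pi))⁻¹))
  refine this.congr (ae_of_all _ fun x => ?_)
  dsimp only
  rw [ENNReal.coe_toReal, Real.coe_toNNReal _ (Gden_nonneg _)]
  simp only [Gden]
  ring

lemma integral_Iic_id_gamma1 (a : ℝ) : ∫ x in Iic a, x ∂gamma1 = -Gden a := by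
  rw [gamma1_setIntegral _ measurableSet_Iic]
  have hderiv : ∀ x ∈ Iic a, HasDerivAt (fun y : ℝ => -Gden y) (Gden x * x) x := by
    intro x _
    have h1 : HasDerivAt (fun y : ℝ => -y ^ 2 / 2) (-x) x := by
      have h1' := ((hasDerivAt_pow 2 x).neg).div_const 2
      exact h1'.congr_deriv (by norm_num; ring)
    have h2 := (h1.exp).const_mul ((Real.sqrt (2 * Real.pi))⁻¹)
    have h3 : HasDerivAt (fun y : ℝ => -Gden y)
        (-((Real.sqrt (2 * Real.pi))⁻¹ * (Real.exp (-x ^ 2 / 2) * -x))) x := h2.neg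
    have h4 : Gden x * x = -((Real.sqrt (2 * Real.pi))⁻¹ * (Real.exp (-x ^ 2 / 2) * -x)) := by
      simp only [Gden]; ring
    rw [h4]; exact h3
  have hint : IntegrableOn (fun x => Gden x * x) (Iic a) volume := by
    have h : Integrable (fun x : ℝ => x * Real.exp (-(1/2) * x ^ 2)) volume :=
      integrable_mul_exp_neg_mul_sq (by norm_num)
    have := (h.const_mul ((Real.sqrt (2 * Real.pi))⁻¹)).integrableOn (s := Iic a)
    refine this.congr_fun (fun x _ => ?_) measurableSet_Iic
    simp only [Gden]
    ring_nf
  have htt : Tendsto (fun y : ℝ => -Gden y) atBot (nhds 0) := by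
    have hsq : Tendsto (fun y : ℝ => y ^ 2) atBot atTop := by
      have h1 : Tendsto (fun y : ℝ => (-y) ^ 2) atBot atTop :=
        (tendsto_pow_atTop (two_ne_zero)).comp tendsto_neg_atBot_atTop
      refine h1.congr fun y => ?_
      rw [neg_pow]; simp
    have harg : Tendsto (fun y : ℝ => -y ^ 2 / 2) atBot atBot := by
      have := (tendsto_neg_atTop_atBot.comp hsq).atBot_div_const (by norm_num : (0:ℝ) < 2)
      exact this
    have hexp : Tendsto (fun y : ℝ => Real.exp (-y ^ 2 / 2)) atBot (nhds 0) :=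
      Real.tendsto_exp_atBot.comp harg
    have := (hexp.const_mul ((Real.sqrt (2 * Real.pi))⁻¹)).neg
    simpa [Gden] using this
  have := integral_Iic_of_hasDerivAt_of_tendsto' hderiv hint htt
  rw [this]; ring

instance : IsProbabilityMeasure gamma1 :=
  inferInstanceAs (IsProbabilityMeasure (gaussianReal 0 1))

lemma Phi_eq (t : ℝ) : Phi t = ∫ x in Iic t, Gden x := rfl

lemma Gden_integrable : Integrable Gden volume := by
  have := integrable_gaussianPDFReal 0 1
  rwa [gpdf_eq] at this

lemma Gden_pos (x : ℝ) : 0 < Gden x := by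
  have := gaussianPDFReal_pos 0 1 x one_ne_zero
  rwa [gpdf_eq] at this

lemma integral_Gden : ∫ x, Gden x = 1 := by
  have := integral_gaussianPDFReal_eq_one 0 (v := 1) one_ne_zero
  rwa [gpdf_eq] at this

lemma gamma1_Iic (t : ℝ) : (gamma1 (Iic t)).toReal = Phi t := by
  rw [gamma1, gaussianReal_apply_eq_integral 0 one_ne_zero,
    ENNReal.toReal_ofReal (integral_nonneg fun x => gaussianPDFReal_nonneg _ _ _),
    gpdf_eq]
  rfl

lemma Phi_sub {a b : ℝ} (hab : a ≤ b) : Phi b - Phi a = ∫ x in Ioc a b, Gden x := by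
  rw [Phi_eq, Phi_eq, show Iic b = Iic a ∪ Ioc a b by rw [Iic_union_Ioc_eq_Iic hab],
    setIntegral_union (Iic_disjoint_Ioc le_rfl) measurableSet_Ioc
      Gden_integrable.integrableOn Gden_integrable.integrableOn]
  ring

lemma Phi_strictMono : StrictMono Phi := by
  intro a b hab
  have h := Phi_sub hab.le
  have hpos : 0 < ∫ x in Ioc a b, Gden x := by
    rw [setIntegral_pos_iff_support_of_nonneg_ae
      (ae_of_all _ fun x => (Gden_pos x).le) Gden_integrable.integrableOn]
    have : Function.support Gden = univ := by
      ext x; simp [Function.support, (Gden_pos x).ne']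
    rw [this, univ_inter, Real.volume_Ioc]
    simp [hab]
  linarith

lemma Gden_le (x : ℝ) : Gden x ≤ (Real.sqrt (2 * Real.pi))⁻¹ := by
  have h1 : Real.exp (-x ^ 2 / 2) ≤ 1 := by
    rw [Real.exp_le_one_iff]
    nlinarith [sq_nonneg x]
  have h2 : (0:ℝ) ≤ (Real.sqrt (2 * Real.pi))⁻¹ := by positivity
  calc Gden x ≤ (Real.sqrt (2 * Real.pi))⁻¹ * 1 := by
        exact mul_le_mul_of_nonneg_left h1 h2
    _ = _ := mul_one _

lemma Phi_continuous : Continuous Phi := by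
  have key : ∀ a b : ℝ, a ≤ b → Phi b - Phi a ≤ (Real.sqrt (2 * Real.pi))⁻¹ * (b - a) := by
    intro a b hab
    rw [Phi_sub hab]
    calc ∫ x in Ioc a b, Gden x ≤ ∫ _x in Ioc a b, (Real.sqrt (2 * Real.pi))⁻¹ := by
          refine setIntegral_mono_on Gden_integrable.integrableOn
            (integrableOn_const ?_) measurableSet_Ioc fun x _ => Gden_le x
          rw [Real.volume_Ioc]; exact ENNReal.ofReal_ne_top
      _ = (b - a) * (Real.sqrt (2 * Real.pi))⁻¹ := by
          rw [setIntegral_const, measureReal_def, Real.volume_Ioc, smul_eq_mul,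
            ENNReal.toReal_ofReal (by linarith)]
      _ = (Real.sqrt (2 * Real.pi))⁻¹ * (b - a) := mul_comm _ _
  have hmono : Monotone Phi := Phi_strictMono.monotone
  refine (lipschitzWith_iff_dist_le_mul (K := ⟨(Real.sqrt (2 * Real.pi))⁻¹, by positivity⟩)).2
    (fun a b => ?_) |>.continuous
  rcases le_total a b with hab | hab
  · rw [Real.dist_eq, Real.dist_eq, abs_of_nonpos (by linarith [hmono hab]),
      abs_of_nonpos (by linarith)]
    have := key a b hab
    push_cast [NNReal.coe_mk]
    change _ ≤ (Real.sqrt (2 * Real.pi))⁻¹ * _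
    linarith
  · rw [Real.dist_eq, Real.dist_eq, abs_of_nonneg (by linarith [hmono hab]),
      abs_of_nonneg (by linarith)]
    have := key b a hab
    push_cast [NNReal.coe_mk]
    change _ ≤ (Real.sqrt (2 * Real.pi))⁻¹ * _
    linarith

lemma Phi_neg (t : ℝ) : Phi (-t) = 1 - Phi t := by
  have h0 : ∀ x : ℝ, Gden (-x) = Gden x := by
    intro x; simp [Gden, neg_sq]
  have h1 : Phi (-t) = ∫ x in Ioi t, Gden x := by
    rw [Phi_eq]
    have h2 := integral_comp_neg_Iic (-t) Gden
    rw [neg_neg] at h2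
    rw [← h2]
    exact setIntegral_congr_fun measurableSet_Iic fun x _ => (h0 x).symm
  rw [h1]
  have h3 := intervalIntegral.integral_Iic_add_Ioi (b := t) (μ := volume)
    Gden_integrable.integrableOn Gden_integrable.integrableOn
  rw [integral_Gden] at h3
  rw [Phi_eq]
  linarith

lemma Phi_tendsto_atTop : Tendsto Phi atTop (nhds 1) := by
  have h1 : Tendsto (fun t => gamma1 (Iic t)) atTop (nhds (gamma1 univ)) :=
    tendsto_measure_Iic_atTop gamma1
  have h2 : gamma1 univ = 1 := measure_univ
  rw [h2] at h1
  have h3 := (ENNReal.tendsto_toReal ENNReal.one_ne_top).comp h1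
  simp only [Function.comp_def, ENNReal.toReal_one] at h3
  exact h3.congr fun t => gamma1_Iic t

lemma Phi_tendsto_atBot : Tendsto Phi atBot (nhds 0) := by
  have h1 : Tendsto (fun t : ℝ => Phi (-t)) atBot (nhds 1) :=
    Phi_tendsto_atTop.comp tendsto_neg_atBot_atTop
  have h2 : Tendsto (fun t : ℝ => 1 - Phi t) atBot (nhds 1) :=
    h1.congr fun t => Phi_neg t
  have h3 := (tendsto_const_nhds (x := (1:ℝ)) (f := atBot)).sub h2
  simpa using h3

lemma Phi_Psi {s : ℝ} (h0 : 0 < s) (h1 : s < 1) : Phi (Psi s) = s := by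
  obtain ⟨a, ha⟩ := (Phi_tendsto_atBot.eventually_lt_const h0).exists
  obtain ⟨b, hb⟩ := (Phi_tendsto_atTop.eventually_const_lt h1).exists
  have hs : s ∈ range Phi := intermediate_value_univ a b Phi_continuous ⟨ha.le, hb.le⟩
  exact Function.invFun_eq hs

lemma qfun_eq (u : ℝ) : qfun u = Gden (Psi u) := by
  rw [qfun, integral_Iic_id_gamma1, neg_neg]

lemma integral_id_gamma1 : ∫ x, x ∂gamma1 = 0 := by
  rw [gamma1_integral (fun x => x)]
  have h := integral_neg_eq_self (fun x => Gden x * x) (volume : Measure ℝ)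
  have h2 : ∀ x : ℝ, Gden (-x) * (-x) = -(Gden x * x) := by
    intro x
    have : Gden (-x) = Gden x := by simp [Gden, neg_sq]
    rw [this]; ring
  simp_rw [h2] at h
  rw [integral_neg] at h
  linarith

lemma integrable_m (m : ℝ → ℝ) (hm : Measurable m) (hm01 : ∀ x, m x ∈ Icc (0:ℝ) 1) :
    Integrable m gamma1 := by
  refine (integrable_const (1:ℝ)).mono' hm.aestronglyMeasurable (ae_of_all _ fun x => ?_)
  rw [Real.norm_eq_abs, abs_of_nonneg (hm01 x).1]
  exact (hm01 x).2

lemma integrable_xm (m : ℝ → ℝ) (hm : Measurable m) (hm01 : ∀ x, m x ∈ Icc (0:ℝ) 1) :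
    Integrable (fun x => x * m x) gamma1 := by
  refine integrable_id_gamma1.abs.mono' (measurable_id.mul hm).aestronglyMeasurable
    (ae_of_all _ fun x => ?_)
  rw [Real.norm_eq_abs, abs_mul]
  calc |x| * |m x| ≤ |x| * 1 := by
        refine mul_le_mul_of_nonneg_left ?_ (abs_nonneg x)
        rw [abs_of_nonneg (hm01 x).1]; exact (hm01 x).2
    _ = |x| := mul_one _

lemma bathtub (m : ℝ → ℝ) (hm : Measurable m) (hm01 : ∀ x, m x ∈ Icc (0:ℝ) 1) (t : ℝ)
    (ht : (gamma1 (Iic t)).toReal = ∫ x, m x ∂gamma1) :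
    ∫ x in Iic t, x ∂gamma1 ≤ ∫ x, x * m x ∂gamma1 := by
  set I : Set ℝ := Iic t with hI
  set χ : ℝ → ℝ := I.indicator 1 with hχ
  have hm_int := integrable_m m hm hm01
  have hxm_int := integrable_xm m hm hm01
  have hχ_int : Integrable χ gamma1 := (integrable_const (1:ℝ)).indicator measurableSet_Iic
  have hid_int : Integrable (I.indicator fun y : ℝ => y) gamma1 :=
    integrable_id_gamma1.indicator measurableSet_Iic
  have key : ∀ x, 0 ≤ (x - t) * (m x - χ x) := by
    intro x
    by_cases hx : x ∈ I
    · have : χ x = 1 := by rw [hχ, indicator_of_mem hx]; rfl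
      rw [this]
      have hx' : x ≤ t := hx
      have h1 : (0:ℝ) ≤ t - x := by linarith
      have h2 : (0:ℝ) ≤ 1 - m x := by linarith [(hm01 x).2]
      nlinarith
    · have : χ x = 0 := by rw [hχ, indicator_of_notMem hx]
      rw [this]
      have hx' : t < x := not_le.1 hx
      exact mul_nonneg (by linarith) (by linarith [(hm01 x).1])
  have hfun_eq : (fun x => (x - t) * (m x - χ x)) =
      fun x => (x * m x - I.indicator (fun y : ℝ => y) x) - t * (m x - χ x) := by
    funext x
    by_cases hx : x ∈ I
    · rw [hχ, indicator_of_mem hx, indicator_of_mem hx]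
      simp only [Pi.one_apply]
      ring
    · rw [hχ, indicator_of_notMem hx, indicator_of_notMem hx]
      ring
  have h0 : 0 ≤ ∫ x, ((x * m x - I.indicator (fun y : ℝ => y) x) - t * (m x - χ x)) ∂gamma1 := by
    rw [← hfun_eq]
    exact integral_nonneg key
  have e1 : ∫ x, ((x * m x - I.indicator (fun y : ℝ => y) x) - t * (m x - χ x)) ∂gamma1 =
      ∫ x, (x * m x - I.indicator (fun y : ℝ => y) x) ∂gamma1 -
        ∫ x, t * (m x - χ x) ∂gamma1 :=
    integral_sub (hxm_int.sub hid_int) ((hm_int.sub hχ_int).const_mul t)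
  have e2 : ∫ x, (x * m x - I.indicator (fun y : ℝ => y) x) ∂gamma1 =
      ∫ x, x * m x ∂gamma1 - ∫ x, I.indicator (fun y : ℝ => y) x ∂gamma1 :=
    integral_sub hxm_int hid_int
  have e3 : ∫ x, t * (m x - χ x) ∂gamma1 = t * ∫ x, (m x - χ x) ∂gamma1 :=
    integral_const_mul t _
  have e4 : ∫ x, (m x - χ x) ∂gamma1 = ∫ x, m x ∂gamma1 - ∫ x, χ x ∂gamma1 :=
    integral_sub hm_int hχ_int
  rw [e1, e2, e3, e4] at h0
  have hχ_val : ∫ x, χ x ∂gamma1 = (gamma1 I).toReal := by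
    rw [hχ]
    exact integral_indicator_one measurableSet_Iic
  have hid_val : ∫ x, I.indicator (fun y : ℝ => y) x ∂gamma1 = ∫ x in I, x ∂gamma1 :=
    integral_indicator measurableSet_Iic
  rw [hχ_val, hid_val, ht] at h0
  linarith

theorem center_of_mass_bound (m : ℝ → ℝ) (hm : Measurable m)
    (hm01 : ∀ x, m x ∈ Set.Icc (0 : ℝ) 1) :
    |∫ x, x * m x ∂gamma1| ≤ qfun (∫ x, m x ∂gamma1) := by
  set s := ∫ x, m x ∂gamma1 with hs
  have hm_int := integrable_m m hm hm01
  have hxm_int := integrable_xm m hm hm01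
  have hs0 : 0 ≤ s := integral_nonneg fun x => (hm01 x).1
  have hq : ∀ u, 0 ≤ qfun u := fun u => by rw [qfun_eq]; exact (Gden_pos _).le
  have hone : ∫ _x : ℝ, (1:ℝ) ∂gamma1 = 1 := by simp
  have hs1 : s ≤ 1 := by
    have := integral_mono hm_int (integrable_const 1) (fun x => (hm01 x).2)
    rw [hone] at this
    exact this
  rcases eq_or_lt_of_le hs0 with h0 | h0
  · have hm0 : m =ᵐ[gamma1] 0 :=
      (integral_eq_zero_iff_of_nonneg (fun x => (hm01 x).1) hm_int).1 h0.symm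
    have hzm : (fun x => x * m x) =ᵐ[gamma1] 0 := hm0.mono fun x hx => by
      simp only [Pi.zero_apply] at hx ⊢; rw [hx, mul_zero]
    rw [integral_congr_ae hzm]
    simpa using hq s
  rcases eq_or_lt_of_le hs1 with h1 | h1
  · have hint1 : Integrable (fun x => 1 - m x) gamma1 := (integrable_const 1).sub hm_int
    have hval : ∫ x, (1 - m x) ∂gamma1 = 0 := by
      rw [integral_sub (integrable_const 1) hm_int, hone, ← hs, h1, sub_self]
    have hm1 : (fun x => 1 - m x) =ᵐ[gamma1] 0 :=
      (integral_eq_zero_iff_of_nonneg (fun x => by simp; linarith [(hm01 x).2]) hint1).1 hval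
    have hzm : (fun x => x * m x) =ᵐ[gamma1] (fun x => x) := hm1.mono fun x hx => by
      simp only [Pi.zero_apply] at hx
      have hmx : m x = 1 := by linarith
      show x * m x = x
      rw [hmx, mul_one]
    rw [integral_congr_ae hzm, integral_id_gamma1, abs_zero]
    exact hq _
  · have ht : Phi (Psi s) = s := Phi_Psi h0 h1
    set t := Psi s with htdef
    have hmeas : (gamma1 (Iic t)).toReal = s := by rw [gamma1_Iic]; exact ht
    have lower := bathtub m hm hm01 t (by rw [hmeas])
    have hm' : Measurable (fun x => 1 - m x) := measurable_const.sub hm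
    have hm01' : ∀ x, 1 - m x ∈ Icc (0:ℝ) 1 := fun x =>
      ⟨by linarith [(hm01 x).2], by linarith [(hm01 x).1]⟩
    have hint1 : ∫ x, (1 - m x) ∂gamma1 = 1 - s := by
      rw [integral_sub (integrable_const 1) hm_int, hone, ← hs]
    have hmeas' : (gamma1 (Iic (-t))).toReal = ∫ x, (1 - m x) ∂gamma1 := by
      rw [gamma1_Iic, Phi_neg, ht, hint1]
    have upper := bathtub _ hm' hm01' (-t) hmeas'
    have hxint : ∫ x, x * (1 - m x) ∂gamma1 = -∫ x, x * m x ∂gamma1 := by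
      have hfe : (fun x => x * (1 - m x)) = fun x => x - x * m x := funext fun x => by ring
      rw [hfe, integral_sub integrable_id_gamma1 hxm_int, integral_id_gamma1]
      ring
    have hIic_t : ∫ x in Iic t, x ∂gamma1 = -Gden t := integral_Iic_id_gamma1 t
    have hIic_t' : ∫ x in Iic (-t), x ∂gamma1 = -Gden t := by
      rw [integral_Iic_id_gamma1]
      congr 1
      simp [Gden, neg_sq]
    have hqs : qfun s = Gden t := qfun_eq s
    rw [hxint] at upper
    rw [hIic_t] at lower
    rw [hIic_t'] at upper
    refine abs_le.2 ⟨?_, ?_⟩ <;> linarith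
end

section
/- Let 0 < h ≤ 1 and let f : ℝ^{n−1} → [0,1] be measurable with ∫ f dγ^{n−1} = h. Then ∫ (f(x)/h)·log(f(x)/h) dγ^{n−1}(x) ≤ h^{−2} · ∫ (q(h) − q(f(x))) dγ^{n−1}(x). -/
open MeasureTheory ProbabilityTheory Real Set Filter Topology

/-- q with the convention q(0)=q(1)=0 (and 0 outside [0,1]). -/
noncomputable def Q (s : ℝ) : ℝ :=
  if 0 < s ∧ s < 1 then (Real.sqrt (2 * Real.pi))⁻¹ * Real.exp (-(Psi s) ^ 2 / 2) else 0

noncomputable def stdGaussian (n : ℕ) : Measure (EuclideanSpace ℝ (Fin n)) :=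
  Measure.map (MeasurableEquiv.toLp 2 (Fin n → ℝ))
    (Measure.pi fun _ : Fin n => gaussianReal 0 1)

namespace EB

noncomputable def phi (t : ℝ) : ℝ := (Real.sqrt (2 * Real.pi))⁻¹ * Real.exp (-t ^ 2 / 2)

lemma sqrt_two_pi_pos : 0 < Real.sqrt (2 * Real.pi) := Real.sqrt_pos.2 (by positivity)

lemma phi_pos (t : ℝ) : 0 < phi t := by
  unfold phi; positivity

lemma continuous_phi : Continuous phi := by
  unfold phi
  exact continuous_const.mul ((continuous_pow 2).neg.div_const 2).rexp

lemma exp_sq_eq (t : ℝ) : Real.exp (-t ^ 2 / 2) = Real.exp (-(1/2) * t ^ 2) := by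
  ring_nf

lemma integrable_phi : Integrable phi := by
  have h : Integrable (fun t : ℝ => Real.exp (-(1/2) * t ^ 2)) := integrable_exp_neg_mul_sq (by norm_num)
  have : Integrable (fun t : ℝ => Real.exp (-t ^ 2 / 2)) := by
    simpa only [exp_sq_eq] using h
  exact this.const_mul _

lemma integral_phi : ∫ t, phi t = 1 := by
  unfold phi
  rw [integral_const_mul]
  have := integral_gaussian (1/2)
  simp only [exp_sq_eq]
  rw [show (fun t : ℝ => Real.exp (-(1/2)*t^2)) = (fun t : ℝ => Real.exp (-(1/2 : ℝ)*t^2)) from rfl] at *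
  rw [this]
  rw [show (Real.pi / (1/2)) = 2 * Real.pi by ring]
  exact inv_mul_cancel₀ sqrt_two_pi_pos.ne'

lemma Phi_eq (t : ℝ) : Phi t = ∫ s in Set.Iic t, phi s := rfl

lemma integrableOn_phi (s : Set ℝ) : IntegrableOn phi s := integrable_phi.integrableOn

lemma hasDerivAt_Phi (t : ℝ) : HasDerivAt Phi (phi t) t := by
  have key : ∀ u : ℝ, Phi u = (∫ x in (0:ℝ)..u, phi x) + Phi 0 := by
    intro u
    rw [Phi_eq, Phi_eq, ← intervalIntegral.integral_Iic_sub_Iic (integrableOn_phi _) (integrableOn_phi _)]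
    ring
  have h1 : HasDerivAt (fun u => (∫ x in (0:ℝ)..u, phi x) + Phi 0) (phi t) t := by
    refine HasDerivAt.add_const _ ?_
    exact intervalIntegral.integral_hasDerivAt_right
      (integrable_phi.intervalIntegrable)
      (continuous_phi.stronglyMeasurableAtFilter _ _)
      continuous_phi.continuousAt
  exact h1.congr_of_eventuallyEq (Filter.Eventually.of_forall fun u => key u)

lemma continuous_Phi : Continuous Phi :=
  continuous_iff_continuousAt.2 fun t => (hasDerivAt_Phi t).continuousAt

lemma strictMono_Phi : StrictMono Phi := by
  apply strictMono_of_deriv_pos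
  intro t
  rw [(hasDerivAt_Phi t).deriv]
  exact phi_pos t

lemma Phi_pos (t : ℝ) : 0 < Phi t := by
  rw [Phi_eq]
  rw [setIntegral_pos_iff_support_of_nonneg_ae
    (Filter.Eventually.of_forall fun x => (phi_pos x).le) (integrableOn_phi _)]
  have : Function.support phi = Set.univ := by
    ext x; simp [Function.mem_support, (phi_pos x).ne']
  rw [this, Set.univ_inter]
  simp [Real.volume_Iic]

lemma Phi_lt_one (t : ℝ) : Phi t < 1 := by
  have hsplit : Phi t + ∫ s in Set.Ioi t, phi s = 1 := by
    rw [Phi_eq, intervalIntegral.integral_Iic_add_Ioi (integrableOn_phi _) (integrableOn_phi _), integral_phi]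
  have hpos : 0 < ∫ s in Set.Ioi t, phi s := by
    rw [setIntegral_pos_iff_support_of_nonneg_ae
      (Filter.Eventually.of_forall fun x => (phi_pos x).le) (integrableOn_phi _)]
    have : Function.support phi = Set.univ := by
      ext x; simp [Function.mem_support, (phi_pos x).ne']
    rw [this, Set.univ_inter]
    simp [Real.volume_Ioi]
  linarith

lemma Phi_tendsto_atTop : Tendsto Phi atTop (𝓝 1) := by
  have := (MeasureTheory.aecover_Iic (μ := (volume : Measure ℝ))
    (l := atTop) (b := fun t : ℝ => t) tendsto_id).integral_tendsto_of_countably_generated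
    integrable_phi
  exact (by simpa [integral_phi] using this : Tendsto (fun i => ∫ x in Iic i, phi x) atTop (𝓝 1))

lemma Phi_tendsto_atBot : Tendsto Phi atBot (𝓝 0) := by
  have key : Tendsto (fun t : ℝ => ∫ x, (Set.Iic t).indicator phi x) atBot (𝓝 (∫ _x : ℝ, (0:ℝ))) := by
    apply tendsto_integral_filter_of_dominated_convergence phi
    · exact Filter.Eventually.of_forall fun t =>
        (continuous_phi.aestronglyMeasurable).indicator measurableSet_Iic
    · exact Filter.Eventually.of_forall fun t =>
        Filter.Eventually.of_forall fun x => by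
          by_cases hx : x ∈ Set.Iic t
          · rw [Set.indicator_of_mem hx]; rw [Real.norm_eq_abs, abs_of_pos (phi_pos x)]
          · rw [Set.indicator_of_notMem hx]; simp [(phi_pos x).le]
    · exact integrable_phi
    · refine Filter.Eventually.of_forall fun x => ?_
      have : ∀ᶠ t : ℝ in atBot, (Set.Iic t).indicator phi x = 0 := by
        filter_upwards [Filter.eventually_lt_atBot x] with t ht
        exact Set.indicator_of_notMem (by simpa using ht.not_ge) _
      exact Tendsto.congr' (this.mono fun t h => h.symm) tendsto_const_nhds
  simp only [integral_zero] at key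
  refine key.congr ?_
  intro t
  rw [integral_indicator measurableSet_Iic, ← Phi_eq]

lemma Phi_mem_Ioo (t : ℝ) : Phi t ∈ Set.Ioo (0:ℝ) 1 := ⟨Phi_pos t, Phi_lt_one t⟩

lemma exists_Phi_eq {s : ℝ} (hs : s ∈ Set.Ioo (0:ℝ) 1) : ∃ t, Phi t = s := by
  obtain ⟨a, ha⟩ : ∃ a, Phi a < s := (Phi_tendsto_atBot.eventually_lt_const hs.1).exists
  obtain ⟨b, hb⟩ : ∃ b, s < Phi b := (Phi_tendsto_atTop.eventually_const_lt hs.2).exists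
  have hab : a ≤ b := by
    by_contra hc
    exact absurd (strictMono_Phi (lt_of_not_ge hc)) (by linarith)
  have := intermediate_value_Icc hab continuous_Phi.continuousOn
  obtain ⟨t, _, ht⟩ := this ⟨ha.le, hb.le⟩
  exact ⟨t, ht⟩

lemma Psi_Phi (t : ℝ) : Psi (Phi t) = t :=
  Function.leftInverse_invFun strictMono_Phi.injective t

lemma Phi_Psi {s : ℝ} (hs : s ∈ Set.Ioo (0:ℝ) 1) : Phi (Psi s) = s :=
  Function.invFun_eq (exists_Phi_eq hs)

lemma Psi_lt_iff {s t : ℝ} (hs : s ∈ Set.Ioo (0:ℝ) 1) : Psi s < t ↔ s < Phi t := by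
  rw [← Phi_Psi hs, strictMono_Phi.lt_iff_lt, Phi_Psi hs]

lemma lt_Psi_iff {s t : ℝ} (hs : s ∈ Set.Ioo (0:ℝ) 1) : t < Psi s ↔ Phi t < s := by
  rw [← Phi_Psi hs, strictMono_Phi.lt_iff_lt, Phi_Psi hs]

lemma strictMonoOn_Psi : StrictMonoOn Psi (Set.Ioo (0:ℝ) 1) := by
  intro a ha b hb hab
  rw [lt_Psi_iff hb, Phi_Psi ha]
  exact hab

lemma continuousAt_Psi {s : ℝ} (hs : s ∈ Set.Ioo (0:ℝ) 1) : ContinuousAt Psi s := by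
  rw [ContinuousAt]
  apply tendsto_order.2
  constructor
  · intro a ha
    have h1 : Phi a < s := by rwa [← lt_Psi_iff hs]
    filter_upwards [Ioo_mem_nhds h1 hs.2] with x hx
    exact (lt_Psi_iff ⟨(Phi_pos a).trans hx.1, hx.2⟩).2 hx.1
  · intro b hb
    have h1 : s < Phi b := by rwa [← Psi_lt_iff hs]
    filter_upwards [Ioo_mem_nhds hs.1 h1] with x hx
    exact (Psi_lt_iff ⟨hx.1, hx.2.trans (Phi_lt_one b)⟩).2 hx.2

lemma Psi_tendsto_atBot : Tendsto Psi (𝓝[>] (0:ℝ)) atBot := by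
  rw [tendsto_atBot]
  intro b
  filter_upwards [Ioo_mem_nhdsGT_of_mem (Set.left_mem_Ico.2 (Phi_pos b))] with s hs
  exact ((Psi_lt_iff ⟨hs.1, hs.2.trans (Phi_lt_one b)⟩).2 hs.2).le

lemma Psi_tendsto_atTop : Tendsto Psi (𝓝[<] (1:ℝ)) atTop := by
  rw [tendsto_atTop]
  intro b
  filter_upwards [Ioo_mem_nhdsLT_of_mem (Set.right_mem_Ioc.2 (Phi_lt_one b))] with s hs
  exact ((lt_Psi_iff ⟨(Phi_pos b).trans hs.1, hs.2⟩).2 hs.1).le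

lemma hasDerivAt_Psi {s : ℝ} (hs : s ∈ Set.Ioo (0:ℝ) 1) :
    HasDerivAt Psi (phi (Psi s))⁻¹ s := by
  apply HasDerivAt.of_local_left_inverse (continuousAt_Psi hs) (hasDerivAt_Phi (Psi s))
    (phi_pos (Psi s)).ne'
  filter_upwards [Ioo_mem_nhds hs.1 hs.2] with x hx
  exact Phi_Psi hx

lemma Q_eq {s : ℝ} (hs : s ∈ Set.Ioo (0:ℝ) 1) : Q s = phi (Psi s) := by
  rw [Q, if_pos ⟨hs.1, hs.2⟩]; rfl

lemma Q_nonneg (s : ℝ) : 0 ≤ Q s := by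
  rw [Q]; split
  · positivity
  · exact le_refl 0

lemma Q_pos {s : ℝ} (hs : s ∈ Set.Ioo (0:ℝ) 1) : 0 < Q s := by
  rw [Q_eq hs]; exact phi_pos _

lemma Q_lt_half (s : ℝ) : Q s < 1/2 := by
  have hS : (0:ℝ) < Real.sqrt (2 * Real.pi) := sqrt_two_pi_pos
  have h2 : (2:ℝ) < Real.sqrt (2 * Real.pi) := by
    nlinarith [Real.pi_gt_three, Real.sq_sqrt (by positivity : (0:ℝ) ≤ 2*Real.pi),
      Real.sqrt_nonneg (2*Real.pi)]
  have hinv : (Real.sqrt (2 * Real.pi))⁻¹ < 1/2 := by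
    have hm := inv_mul_cancel₀ hS.ne'
    have hi : (0:ℝ) < (Real.sqrt (2 * Real.pi))⁻¹ := by positivity
    nlinarith
  rw [Q]; split
  · rename_i hmem
    have hexp : Real.exp (-Psi s ^ 2 / 2) ≤ 1 := by
      rw [Real.exp_le_one_iff]
      nlinarith [sq_nonneg (Psi s)]
    calc (Real.sqrt (2 * Real.pi))⁻¹ * Real.exp (-Psi s ^ 2 / 2)
        ≤ (Real.sqrt (2 * Real.pi))⁻¹ * 1 := by
          exact mul_le_mul_of_nonneg_left hexp (by positivity)
      _ < 1/2 := by rwa [mul_one]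
  · norm_num

lemma hasDerivAt_phi (t : ℝ) : HasDerivAt phi (-t * phi t) t := by
  unfold phi
  have h1 : HasDerivAt (fun t : ℝ => -t ^ 2 / 2) (-t) t := by
    have := ((hasDerivAt_pow 2 t).neg).div_const 2
    simpa using this.congr_deriv (by ring)
  have := (h1.exp).const_mul (Real.sqrt (2 * Real.pi))⁻¹
  exact this.congr_deriv (by ring)

lemma hasDerivAt_Q {s : ℝ} (hs : s ∈ Set.Ioo (0:ℝ) 1) : HasDerivAt Q (-Psi s) s := by
  have h1 : HasDerivAt (fun x => phi (Psi x)) (-Psi s * phi (Psi s) * (phi (Psi s))⁻¹) s :=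
    (hasDerivAt_phi (Psi s)).comp s (hasDerivAt_Psi hs)
  have h2 : -Psi s * phi (Psi s) * (phi (Psi s))⁻¹ = -Psi s := by
    rw [mul_assoc, mul_inv_cancel₀ (phi_pos _).ne', mul_one]
  rw [h2] at h1
  apply h1.congr_of_eventuallyEq
  filter_upwards [Ioo_mem_nhds hs.1 hs.2] with x hx
  exact Q_eq hx

lemma hasDerivAt_Psi' {s : ℝ} (hs : s ∈ Set.Ioo (0:ℝ) 1) : HasDerivAt Psi (Q s)⁻¹ s := by
  rw [Q_eq hs]; exact hasDerivAt_Psi hs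

lemma continuousAt_Q {s : ℝ} (hs : s ∈ Set.Ioo (0:ℝ) 1) : ContinuousAt Q s :=
  (hasDerivAt_Q hs).continuousAt

lemma phi_tendsto_atTop : Tendsto phi atTop (𝓝 0) := by
  unfold phi
  rw [show (0:ℝ) = (Real.sqrt (2 * Real.pi))⁻¹ * 0 by ring]
  apply Tendsto.const_mul
  apply Real.tendsto_exp_atBot.comp
  have h : Tendsto (fun t : ℝ => t ^ 2 / 2) atTop atTop :=
    (tendsto_pow_atTop (by norm_num)).atTop_div_const (by norm_num)
  have := tendsto_neg_atTop_atBot.comp h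
  simpa [Function.comp_def, neg_div] using this

lemma phi_tendsto_atBot : Tendsto phi atBot (𝓝 0) := by
  unfold phi
  rw [show (0:ℝ) = (Real.sqrt (2 * Real.pi))⁻¹ * 0 by ring]
  apply Tendsto.const_mul
  apply Real.tendsto_exp_atBot.comp
  apply tendsto_atBot_mono' atBot (f₁ := fun t : ℝ => t / 2)
  · filter_upwards [Filter.eventually_le_atBot (-1 : ℝ)] with t ht
    nlinarith
  · exact (tendsto_id (α := ℝ)).atBot_div_const (by norm_num)

lemma Q_tendsto_left : Tendsto Q (𝓝[>] (0:ℝ)) (𝓝 0) := by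
  have h1 : Tendsto (fun s => phi (Psi s)) (𝓝[>] (0:ℝ)) (𝓝 0) :=
    phi_tendsto_atBot.comp Psi_tendsto_atBot
  apply h1.congr'
  filter_upwards [Ioo_mem_nhdsGT_of_mem (Set.left_mem_Ico.2 one_pos)] with s hs
  exact (Q_eq hs).symm

lemma Q_tendsto_right : Tendsto Q (𝓝[<] (1:ℝ)) (𝓝 0) := by
  have h1 : Tendsto (fun s => phi (Psi s)) (𝓝[<] (1:ℝ)) (𝓝 0) :=
    phi_tendsto_atTop.comp Psi_tendsto_atTop
  apply h1.congr'
  filter_upwards [Ioo_mem_nhdsLT_of_mem (Set.right_mem_Ioc.2 one_pos)] with s hs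
  exact (Q_eq hs).symm

lemma measurable_Q : Measurable Q := by
  apply measurable_of_isOpen
  intro U hU
  have hcont : ContinuousOn Q (Set.Ioo (0:ℝ) 1) := fun x hx => (continuousAt_Q hx).continuousWithinAt
  have hsplit : Q ⁻¹' U = (Set.Ioo (0:ℝ) 1 ∩ Q ⁻¹' U) ∪ ((Set.Ioo (0:ℝ) 1)ᶜ ∩ Q ⁻¹' U) := by
    ext x; by_cases hx : x ∈ Set.Ioo (0:ℝ) 1 <;> simp [hx]
  rw [hsplit]
  apply MeasurableSet.union
  · exact (hcont.isOpen_inter_preimage isOpen_Ioo hU).measurableSet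
  · have hQ0 : ∀ x, x ∉ Set.Ioo (0:ℝ) 1 → Q x = 0 := by
      intro x hx
      rw [Q, if_neg]
      intro hc; exact hx ⟨hc.1, hc.2⟩
    by_cases h0 : (0:ℝ) ∈ U
    · have heq : ((Set.Ioo (0:ℝ) 1)ᶜ ∩ Q ⁻¹' U) = (Set.Ioo (0:ℝ) 1)ᶜ := by
        ext x
        simp only [Set.mem_inter_iff, Set.mem_compl_iff, Set.mem_preimage, and_iff_left_iff_imp]
        intro hx
        rw [hQ0 x hx]; exact h0
      rw [heq]; exact measurableSet_Ioo.compl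
    · have heq : ((Set.Ioo (0:ℝ) 1)ᶜ ∩ Q ⁻¹' U) = ∅ := by
        ext x
        simp only [Set.mem_inter_iff, Set.mem_compl_iff, Set.mem_preimage,
          Set.mem_empty_iff_false, iff_false, not_and]
        intro hx
        rw [hQ0 x hx]; exact h0
      rw [heq]; exact MeasurableSet.empty

lemma Q_zero : Q 0 = 0 := by rw [Q, if_neg]; simp

lemma Q_one : Q 1 = 0 := by rw [Q, if_neg]; simp

lemma Q_eq_zero_of_not_mem {s : ℝ} (hs : s ∉ Set.Ioo (0:ℝ) 1) : Q s = 0 := by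
  rw [Q, if_neg]
  intro hc; exact hs ⟨hc.1, hc.2⟩

lemma continuous_Q : Continuous Q := by
  rw [continuous_iff_continuousAt]
  intro x
  rcases lt_trichotomy x 0 with hx | rfl | hx
  · have : Q =ᶠ[𝓝 x] fun _ => 0 := by
      filter_upwards [Iio_mem_nhds hx] with y hy
      exact Q_eq_zero_of_not_mem (fun hc => absurd hc.1 (not_lt.2 hy.le))
    exact ContinuousAt.congr continuousAt_const this.symm
  · have hleft : Tendsto Q (𝓝[≤] (0:ℝ)) (𝓝 0) := by
      apply Tendsto.congr' _ tendsto_const_nhds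
      filter_upwards [self_mem_nhdsWithin] with y (hy : y ≤ 0)
      exact (Q_eq_zero_of_not_mem (fun hc => absurd hc.1 (not_lt.2 hy))).symm
    have h2 : Tendsto Q (𝓝[≤] (0:ℝ) ⊔ 𝓝[>] 0) (𝓝 0) := tendsto_sup.2 ⟨hleft, Q_tendsto_left⟩
    rw [nhdsLE_sup_nhdsGT] at h2
    rw [ContinuousAt, Q_zero]
    exact h2
  · rcases lt_trichotomy x 1 with hx1 | rfl | hx1
    · exact continuousAt_Q ⟨hx, hx1⟩
    · have hright : Tendsto Q (𝓝[≥] (1:ℝ)) (𝓝 0) := by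
        apply Tendsto.congr' _ tendsto_const_nhds
        filter_upwards [self_mem_nhdsWithin] with y (hy : 1 ≤ y)
        exact (Q_eq_zero_of_not_mem (fun hc => absurd hc.2 (not_lt.2 hy))).symm
      have h2 : Tendsto Q (𝓝[<] (1:ℝ) ⊔ 𝓝[≥] 1) (𝓝 0) := tendsto_sup.2 ⟨Q_tendsto_right, hright⟩
      rw [nhdsLT_sup_nhdsGE] at h2
      rw [ContinuousAt, Q_one]
      exact h2
    · have : Q =ᶠ[𝓝 x] fun _ => 0 := by
        filter_upwards [Ioi_mem_nhds hx1] with y hy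
        exact Q_eq_zero_of_not_mem (fun hc => absurd hc.2 (not_lt.2 hy.le))
      exact ContinuousAt.congr continuousAt_const this.symm

/-- Gaussian tail bound: for `t < 0`, `(-t) * Phi t ≤ phi t`. -/
lemma tail_bound {t : ℝ} (ht : t < 0) : (-t) * Phi t ≤ phi t := by
  have hint : IntegrableOn (fun u : ℝ => -u * phi u) (Set.Iic t) := by
    have h1 : Integrable (fun u : ℝ => u * Real.exp (-(1/2) * u ^ 2)) :=
      integrable_mul_exp_neg_mul_sq (by norm_num)
    have h2 : Integrable (fun u : ℝ => -u * phi u) := by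
      have hng := (h1.const_mul ((Real.sqrt (2 * Real.pi))⁻¹)).neg
      apply hng.congr
      refine Filter.Eventually.of_forall fun u => ?_
      show -((Real.sqrt (2 * Real.pi))⁻¹ * (u * Real.exp (-(1/2) * u ^ 2))) = -u * phi u
      unfold phi
      rw [exp_sq_eq]
      ring
    exact h2.integrableOn
  have hkey : ∫ u in Set.Iic t, -u * phi u = phi t := by
    have := integral_Iic_of_hasDerivAt_of_tendsto' (a := t) (f := phi)
      (f' := fun u => -u * phi u) (m := 0)
      (fun x _ => hasDerivAt_phi x) hint phi_tendsto_atBot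
    simpa using this
  have hmono : (-t) * Phi t ≤ ∫ u in Set.Iic t, -u * phi u := by
    rw [Phi_eq, ← integral_const_mul]
    apply setIntegral_mono_on
    · exact (integrableOn_phi _).const_mul _
    · exact hint
    · exact measurableSet_Iic
    · intro u hu
      have hu' : u ≤ t := hu
      have : 0 < phi u := phi_pos u
      nlinarith
  linarith [hmono, hkey.le]

lemma Psi_nonpos {s : ℝ} (hs0 : 0 < s) (hs : s ≤ Phi 0) : Psi s ≤ 0 := by
  rcases eq_or_lt_of_le hs with rfl | hlt
  · exact (Psi_Phi 0).le
  · have := strictMonoOn_Psi ⟨hs0, hlt.trans (Phi_lt_one 0)⟩ (Phi_mem_Ioo 0) hlt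
    rw [Psi_Phi 0] at this
    exact this.le

lemma sPsi_tendsto : Tendsto (fun s => s * Psi s) (𝓝[>] (0:ℝ)) (𝓝 0) := by
  refine squeeze_zero_norm' ?_ Q_tendsto_left
  filter_upwards [Ioo_mem_nhdsGT_of_mem (Set.left_mem_Ico.2 (Phi_pos 0))] with s hs
  have hs01 : s ∈ Set.Ioo (0:ℝ) 1 := ⟨hs.1, hs.2.trans (Phi_lt_one 0)⟩
  have hneg : Psi s ≤ 0 := Psi_nonpos hs.1 hs.2.le
  have htail : (-(Psi s)) * Phi (Psi s) ≤ phi (Psi s) := by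
    rcases eq_or_lt_of_le hneg with heq | hlt
    · rw [heq]; simp [(phi_pos _).le]
    · exact tail_bound hlt
  rw [Phi_Psi hs01] at htail
  rw [Real.norm_eq_abs, abs_of_nonpos (mul_nonpos_of_nonneg_of_nonpos hs.1.le hneg), Q_eq hs01]
  nlinarith [htail]

/-- The key quantity `K h = Q h + h * Psi h - h ^ 2` is nonnegative on `(0,1)`. -/
lemma K_nonneg {h : ℝ} (hh : h ∈ Set.Ioo (0:ℝ) 1) : 0 ≤ Q h + h * Psi h - h ^ 2 := by
  set K : ℝ → ℝ := fun s => Q s + s * Psi s - s ^ 2 with hK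
  have hderiv : ∀ s ∈ Set.Ioo (0:ℝ) 1, HasDerivAt K (s * ((Q s)⁻¹ - 2)) s := by
    intro s hs
    have h1 : HasDerivAt (fun x => x * Psi x) (1 * Psi s + s * (Q s)⁻¹) s :=
      (hasDerivAt_id s).mul (hasDerivAt_Psi' hs)
    have h2 : HasDerivAt (fun x : ℝ => x ^ 2) (2 * s) s := by
      simpa using hasDerivAt_pow 2 s
    have := ((hasDerivAt_Q hs).add h1).sub h2
    exact this.congr_deriv (by ring)
  have hmono : StrictMonoOn K (Set.Ioo (0:ℝ) 1) := by
    apply strictMonoOn_of_deriv_pos (convex_Ioo 0 1)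
    · intro s hs
      exact (hderiv s hs).continuousAt.continuousWithinAt
    · intro s hs
      rw [interior_Ioo] at hs
      rw [(hderiv s hs).deriv]
      have hQ : 0 < Q s := Q_pos hs
      have hQh : Q s < 1/2 := Q_lt_half s
      have : (2:ℝ) < (Q s)⁻¹ := by
        have := inv_mul_cancel₀ hQ.ne'
        nlinarith [inv_pos.2 hQ]
      have := hs.1
      nlinarith
  have hlim : Tendsto K (𝓝[>] (0:ℝ)) (𝓝 0) := by
    have h0 : Tendsto (fun s : ℝ => s ^ 2) (𝓝[>] (0:ℝ)) (𝓝 0) := by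
      have : Tendsto (fun s : ℝ => s ^ 2) (𝓝 (0:ℝ)) (𝓝 0) := by
        simpa using (continuous_pow 2).tendsto (0:ℝ)
      exact this.mono_left nhdsWithin_le_nhds
    have := (Q_tendsto_left.add sPsi_tendsto).sub h0
    simpa using this
  have hev : ∀ᶠ s in 𝓝[>] (0:ℝ), K s ≤ K h := by
    filter_upwards [Ioo_mem_nhdsGT_of_mem (Set.left_mem_Ico.2 hh.1)] with s hs
    exact (hmono ⟨hs.1, hs.2.trans hh.2⟩ hh hs.2).le
  exact le_of_tendsto hlim hev

noncomputable def Df (h t : ℝ) : ℝ := h⁻¹ ^ 2 * (Psi t - Psi h) - (1/h) * Real.log (t/h)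

noncomputable def Gf (h t : ℝ) : ℝ :=
  h⁻¹ ^ 2 * (Q h - Q t) + (t - h)/h - h⁻¹ ^ 2 * Psi h * (t - h) - (t/h) * Real.log (t/h)

lemma Df_self {h : ℝ} (hh : h ≠ 0) : Df h h = 0 := by
  rw [Df, div_self hh, Real.log_one]
  ring

lemma Gf_self {h : ℝ} (hh : h ≠ 0) : Gf h h = 0 := by
  rw [Gf, div_self hh, Real.log_one]
  ring

lemma continuous_Gf {h : ℝ} (hh : h ≠ 0) : Continuous (Gf h) := by
  unfold Gf
  have hml : Continuous (fun t : ℝ => (t/h) * Real.log (t/h)) :=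
    Real.continuous_mul_log.comp (continuous_id.div_const h)
  exact ((((continuous_const.mul (continuous_const.sub continuous_Q)).add
    ((continuous_id.sub continuous_const).div_const h)).sub
    (continuous_const.mul (continuous_id.sub continuous_const))).sub hml)

lemma hasDerivAt_Gf {h t : ℝ} (hh : h ∈ Set.Ioo (0:ℝ) 1) (ht : t ∈ Set.Ioo (0:ℝ) 1) :
    HasDerivAt (Gf h) (Df h t) t := by
  have hth : t / h ≠ 0 := div_ne_zero ht.1.ne' hh.1.ne'
  have h1 : HasDerivAt (fun t => h⁻¹ ^ 2 * (Q h - Q t)) (h⁻¹ ^ 2 * Psi t) t := by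
    have := ((hasDerivAt_Q ht).const_sub (Q h)).const_mul (h⁻¹ ^ 2)
    exact this.congr_deriv (by ring)
  have h2 : HasDerivAt (fun t : ℝ => (t - h)/h) (1/h) t := by
    have := ((hasDerivAt_id t).sub_const h).div_const h
    simpa using this
  have h3 : HasDerivAt (fun t : ℝ => h⁻¹ ^ 2 * Psi h * (t - h)) (h⁻¹ ^ 2 * Psi h) t := by
    have := ((hasDerivAt_id t).sub_const h).const_mul (h⁻¹ ^ 2 * Psi h)
    simpa using this
  have h4 : HasDerivAt (fun t : ℝ => (t/h) * Real.log (t/h))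
      ((Real.log (t/h) + 1) * (1/h)) t := by
    have hin : HasDerivAt (fun t : ℝ => t/h) (1/h) t := by
      simpa using (hasDerivAt_id t).div_const h
    exact (Real.hasDerivAt_mul_log hth).comp t hin
  have := ((h1.add h2).sub h3).sub h4
  exact this.congr_deriv (by rw [Df]; ring)

lemma hasDerivAt_Df {h t : ℝ} (hh : h ∈ Set.Ioo (0:ℝ) 1) (ht : t ∈ Set.Ioo (0:ℝ) 1) :
    HasDerivAt (Df h) (h⁻¹ ^ 2 * (Q t)⁻¹ - 1/(h*t)) t := by
  have hth : t / h ≠ 0 := div_ne_zero ht.1.ne' hh.1.ne'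
  have h1 : HasDerivAt (fun t => h⁻¹ ^ 2 * (Psi t - Psi h)) (h⁻¹ ^ 2 * (Q t)⁻¹) t := by
    have := ((hasDerivAt_Psi' ht).sub_const (Psi h)).const_mul (h⁻¹ ^ 2)
    simpa using this
  have h2 : HasDerivAt (fun t : ℝ => (1/h) * Real.log (t/h)) (1/(h*t)) t := by
    have hin : HasDerivAt (fun t : ℝ => t/h) (1/h) t := by
      simpa using (hasDerivAt_id t).div_const h
    have h0 := hh.1
    have t0 := ht.1
    have := ((Real.hasDerivAt_log hth).comp t hin).const_mul (1/h)
    exact this.congr_deriv (by field_simp)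
  have := h1.sub h2
  exact this

/-- `D' ≥ 0` when `h * Q t ≤ t`. -/
lemma Df_deriv_nonneg {h t : ℝ} (hh : h ∈ Set.Ioo (0:ℝ) 1) (ht : t ∈ Set.Ioo (0:ℝ) 1)
    (hu : h * Q t ≤ t) : 0 ≤ h⁻¹ ^ 2 * (Q t)⁻¹ - 1/(h*t) := by
  have hQ : 0 < Q t := Q_pos ht
  have h0 : 0 < h := hh.1
  have t0 : 0 < t := ht.1
  rw [sub_nonneg, div_le_iff₀ (by positivity)]
  have heq : h⁻¹ ^ 2 * (Q t)⁻¹ * (h * t) = t / (h * Q t) := by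
    field_simp
  rw [heq, le_div_iff₀ (by positivity), one_mul]
  exact hu

lemma Df_deriv_nonpos {h t : ℝ} (hh : h ∈ Set.Ioo (0:ℝ) 1) (ht : t ∈ Set.Ioo (0:ℝ) 1)
    (hu : t ≤ h * Q t) : h⁻¹ ^ 2 * (Q t)⁻¹ - 1/(h*t) ≤ 0 := by
  have hQ : 0 < Q t := Q_pos ht
  have h0 : 0 < h := hh.1
  have t0 : 0 < t := ht.1
  rw [sub_nonpos, le_div_iff₀ (by positivity)]
  have heq : h⁻¹ ^ 2 * (Q t)⁻¹ * (h * t) = t / (h * Q t) := by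
    field_simp
  rw [heq, div_le_iff₀ (by positivity), one_mul]
  exact hu

/-- If `h * Q s ≤ s` on `(x, h)` with `0 < x ≤ h < 1`, then `Df h x ≤ 0`. -/
lemma Df_nonpos_left {h x : ℝ} (hh : h ∈ Set.Ioo (0:ℝ) 1) (hx : x ∈ Set.Ioo (0:ℝ) 1)
    (hxh : x ≤ h) (hu : ∀ s ∈ Set.Ioo x h, h * Q s ≤ s) : Df h x ≤ 0 := by
  have hmono : MonotoneOn (Df h) (Set.Icc x h) := by
    apply monotoneOn_of_deriv_nonneg (convex_Icc x h)
    · intro y hy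
      have hy01 : y ∈ Set.Ioo (0:ℝ) 1 := ⟨lt_of_lt_of_le hx.1 hy.1, lt_of_le_of_lt hy.2 hh.2⟩
      exact (hasDerivAt_Df hh hy01).continuousAt.continuousWithinAt
    · intro y hy
      rw [interior_Icc] at hy
      have hy01 : y ∈ Set.Ioo (0:ℝ) 1 := ⟨hx.1.trans hy.1, hy.2.trans hh.2⟩
      exact (hasDerivAt_Df hh hy01).differentiableAt.differentiableWithinAt
    · intro y hy
      rw [interior_Icc] at hy
      have hy01 : y ∈ Set.Ioo (0:ℝ) 1 := ⟨hx.1.trans hy.1, hy.2.trans hh.2⟩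
      rw [(hasDerivAt_Df hh hy01).deriv]
      exact Df_deriv_nonneg hh hy01 (hu y hy)
  have := hmono (Set.left_mem_Icc.2 hxh) (Set.right_mem_Icc.2 hxh) hxh
  rwa [Df_self hh.1.ne'] at this

/-- If `h * Q s ≤ s` on `(h, x)` with `0 < h ≤ x < 1`, then `0 ≤ Df h x`. -/
lemma Df_nonneg_right {h x : ℝ} (hh : h ∈ Set.Ioo (0:ℝ) 1) (hx : x ∈ Set.Ioo (0:ℝ) 1)
    (hxh : h ≤ x) (hu : ∀ s ∈ Set.Ioo h x, h * Q s ≤ s) : 0 ≤ Df h x := by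
  have hmono : MonotoneOn (Df h) (Set.Icc h x) := by
    apply monotoneOn_of_deriv_nonneg (convex_Icc h x)
    · intro y hy
      have hy01 : y ∈ Set.Ioo (0:ℝ) 1 := ⟨lt_of_lt_of_le hh.1 hy.1, lt_of_le_of_lt hy.2 hx.2⟩
      exact (hasDerivAt_Df hh hy01).continuousAt.continuousWithinAt
    · intro y hy
      rw [interior_Icc] at hy
      have hy01 : y ∈ Set.Ioo (0:ℝ) 1 := ⟨hh.1.trans hy.1, hy.2.trans hx.2⟩
      exact (hasDerivAt_Df hh hy01).differentiableAt.differentiableWithinAt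
    · intro y hy
      rw [interior_Icc] at hy
      have hy01 : y ∈ Set.Ioo (0:ℝ) 1 := ⟨hh.1.trans hy.1, hy.2.trans hx.2⟩
      rw [(hasDerivAt_Df hh hy01).deriv]
      exact Df_deriv_nonneg hh hy01 (hu y hy)
  have := hmono (Set.left_mem_Icc.2 hxh) (Set.right_mem_Icc.2 hxh) hxh
  rwa [Df_self hh.1.ne'] at this

/-- H1: if `h * Q s ≤ s` on `(a, h)`, then `Gf h` is nonneg on `[a, h]`. -/
lemma Gf_nonneg_of_left {h a : ℝ} (hh : h ∈ Set.Ioo (0:ℝ) 1) (ha0 : 0 ≤ a) (hah : a ≤ h)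
    (hu : ∀ s ∈ Set.Ioo a h, h * Q s ≤ s) : ∀ t ∈ Set.Icc a h, 0 ≤ Gf h t := by
  have hanti : AntitoneOn (Gf h) (Set.Icc a h) := by
    apply antitoneOn_of_deriv_nonpos (convex_Icc a h) (continuous_Gf hh.1.ne').continuousOn
    · intro y hy
      rw [interior_Icc] at hy
      have hy01 : y ∈ Set.Ioo (0:ℝ) 1 := ⟨lt_of_le_of_lt ha0 hy.1, hy.2.trans hh.2⟩
      exact (hasDerivAt_Gf hh hy01).differentiableAt.differentiableWithinAt
    · intro y hy
      rw [interior_Icc] at hy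
      have hy01 : y ∈ Set.Ioo (0:ℝ) 1 := ⟨lt_of_le_of_lt ha0 hy.1, hy.2.trans hh.2⟩
      rw [(hasDerivAt_Gf hh hy01).deriv]
      exact Df_nonpos_left hh hy01 hy.2.le (fun s hs => hu s ⟨hy.1.trans hs.1, hs.2⟩)
  intro t ht
  have := hanti ht (Set.right_mem_Icc.2 hah) ht.2
  rwa [Gf_self hh.1.ne'] at this

/-- H2: `Gf h` is nonneg on `[h, 1]`. -/
lemma Gf_nonneg_right {h : ℝ} (hh : h ∈ Set.Ioo (0:ℝ) 1) :
    ∀ t ∈ Set.Icc h 1, 0 ≤ Gf h t := by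
  have hu : ∀ s ∈ Set.Ioo h 1, h * Q s ≤ s := by
    intro s hs
    have : Q s < 1 := (Q_lt_half s).trans (by norm_num)
    nlinarith [hh.1, hs.1, Q_nonneg s]
  have hmono : MonotoneOn (Gf h) (Set.Icc h 1) := by
    apply monotoneOn_of_deriv_nonneg (convex_Icc h 1) (continuous_Gf hh.1.ne').continuousOn
    · intro y hy
      rw [interior_Icc] at hy
      have hy01 : y ∈ Set.Ioo (0:ℝ) 1 := ⟨hh.1.trans hy.1, hy.2⟩
      exact (hasDerivAt_Gf hh hy01).differentiableAt.differentiableWithinAt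
    · intro y hy
      rw [interior_Icc] at hy
      have hy01 : y ∈ Set.Ioo (0:ℝ) 1 := ⟨hh.1.trans hy.1, hy.2⟩
      rw [(hasDerivAt_Gf hh hy01).deriv]
      exact Df_nonneg_right hh hy01 hy.1.le (fun s hs => hu s ⟨hs.1, hs.2.trans hy.2⟩)
  intro t ht
  have := hmono (Set.left_mem_Icc.2 hh.2.le) ht ht.1
  rwa [Gf_self hh.1.ne'] at this

lemma concaveOn_Q : ConcaveOn ℝ (Set.Icc (0:ℝ) 1) Q := by
  apply AntitoneOn.concaveOn_of_deriv (convex_Icc 0 1) continuous_Q.continuousOn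
  · intro y hy
    rw [interior_Icc] at hy
    exact (hasDerivAt_Q hy).differentiableAt.differentiableWithinAt
  · intro a ha b hb hab
    rw [interior_Icc] at ha hb
    rw [(hasDerivAt_Q ha).deriv, (hasDerivAt_Q hb).deriv, neg_le_neg_iff]
    exact strictMonoOn_Psi.monotoneOn ha hb hab

lemma convexOn_u {h : ℝ} (h0 : 0 ≤ h) :
    ConvexOn ℝ (Set.Icc (0:ℝ) 1) (fun t => t - h * Q t) := by
  have h1 : ConcaveOn ℝ (Set.Icc (0:ℝ) 1) (fun t => h * Q t) := by
    have := concaveOn_Q.smul h0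
    simpa [smul_eq_mul] using this
  have h2 := (convexOn_id (convex_Icc (0:ℝ) 1)).sub h1
  have : (id - fun t => h * Q t) = (fun t : ℝ => t - h * Q t) := by
    funext t; simp [Pi.sub_apply]
  rwa [this] at h2

/-- The pointwise inequality: `Gf h t ≥ 0` for `t ∈ [0,1]`, `h ∈ (0,1)`. -/
lemma Gf_nonneg {h : ℝ} (hh : h ∈ Set.Ioo (0:ℝ) 1) : ∀ t ∈ Set.Icc (0:ℝ) 1, 0 ≤ Gf h t := by
  have hG0 : 0 ≤ Gf h 0 := by
    have hK := K_nonneg hh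
    have e1 : h⁻¹ ^ 2 * h ^ 2 = 1 := by
      rw [inv_pow]
      exact inv_mul_cancel₀ (pow_ne_zero 2 hh.1.ne')
    have e2 : (0:ℝ) ≤ h⁻¹ ^ 2 * (Q h + h * Psi h - h ^ 2) := by
      apply mul_nonneg _ hK
      positivity
    have e3 : Gf h 0 = h⁻¹ ^ 2 * (Q h + h * Psi h - h ^ 2) + h⁻¹ ^ 2 * h ^ 2 - 1 := by
      rw [Gf, Q_zero]
      rw [zero_div, Real.log_zero, zero_mul, zero_sub, neg_div, div_self hh.1.ne']
      ring
    rw [e3, e1]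
    linarith
  intro t ht
  rcases le_or_gt h t with hth | hth
  · exact Gf_nonneg_right hh t ⟨hth, ht.2⟩
  by_cases hcase : ∀ s ∈ Set.Ioo (0:ℝ) h, h * Q s ≤ s
  · exact Gf_nonneg_of_left hh le_rfl hh.1.le hcase t ⟨ht.1, hth.le⟩
  push_neg at hcase
  obtain ⟨s₀, hs₀, hs₀u⟩ := hcase
  set u : ℝ → ℝ := fun t => t - h * Q t with hu_def
  set B := {s ∈ Set.Icc s₀ h | u s ≤ 0} with hB_def
  have hs₀B : s₀ ∈ B := ⟨⟨le_rfl, hs₀.2.le⟩, by simp only [hu_def]; linarith⟩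
  have hBne : B.Nonempty := ⟨s₀, hs₀B⟩
  have hBbd : BddAbove B := ⟨h, fun x hx => hx.1.2⟩
  have hBclosed : IsClosed B := by
    have hucont : Continuous u := continuous_id.sub (continuous_const.mul continuous_Q)
    have : B = Set.Icc s₀ h ∩ u ⁻¹' (Set.Iic 0) := by
      ext x; simp [hB_def, Set.mem_inter_iff]
    rw [this]
    exact isClosed_Icc.inter (isClosed_Iic.preimage hucont)
  set t₀ := sSup B with ht₀_def
  have ht₀B : t₀ ∈ B := hBclosed.csSup_mem hBne hBbd
  have ht₀0 : 0 < t₀ := lt_of_lt_of_le hs₀.1 (le_csSup hBbd hs₀B)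
  have ht₀h : t₀ < h := by
    rcases lt_or_eq_of_le ht₀B.1.2 with hlt | heq
    · exact hlt
    · exfalso
      have hQh : Q h < 1 := (Q_lt_half h).trans (by norm_num)
      have : u h ≤ 0 := heq ▸ ht₀B.2
      simp only [hu_def] at this
      nlinarith [hh.1]
  have ht₀1 : t₀ < 1 := ht₀h.trans hh.2
  have hright : ∀ s ∈ Set.Ioo t₀ h, h * Q s ≤ s := by
    intro s hs
    by_contra hc
    push_neg at hc
    have hsB : s ∈ B := ⟨⟨(le_csSup hBbd hs₀B).trans hs.1.le, hs.2.le⟩, by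
      simp only [hu_def]; linarith⟩
    exact absurd (le_csSup hBbd hsB) (not_le.2 hs.1)
  have hGt₀ := Gf_nonneg_of_left hh (a := t₀) ht₀0.le ht₀h.le hright
  rcases le_or_gt t₀ t with h1 | h1
  · exact hGt₀ t ⟨h1, hth.le⟩
  -- t < t₀ : use concavity on [0, t₀]
  have hleft : ∀ s ∈ Set.Ioc (0:ℝ) t₀, u s ≤ 0 := by
    intro s hs
    have hcvx := convexOn_u hh.1.le
    have h0m : (0:ℝ) ∈ Set.Icc (0:ℝ) 1 := ⟨le_rfl, zero_le_one⟩
    have ht₀m : t₀ ∈ Set.Icc (0:ℝ) 1 := ⟨ht₀0.le, ht₀1.le⟩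
    have hb0 : 0 ≤ s / t₀ := div_nonneg hs.1.le ht₀0.le
    have hb1 : s / t₀ ≤ 1 := (div_le_one ht₀0).2 hs.2
    have hcomb := hcvx.2 h0m ht₀m (show (0:ℝ) ≤ 1 - s / t₀ by linarith) hb0 (by ring)
    have heq : (1 - s / t₀) • (0:ℝ) + (s / t₀) • t₀ = s := by
      rw [smul_eq_mul, smul_eq_mul, mul_zero, zero_add, div_mul_cancel₀ _ ht₀0.ne']
    rw [heq] at hcomb
    have hu0 : (fun t => t - h * Q t) 0 = 0 := by simp [Q_zero]
    have hut₀ : (fun t => t - h * Q t) t₀ ≤ 0 := ht₀B.2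
    calc u s = (fun t => t - h * Q t) s := rfl
    _ ≤ (1 - s / t₀) • (fun t => t - h * Q t) 0 + (s / t₀) • ((fun t => t - h * Q t) t₀) := hcomb
    _ ≤ 0 := by
        rw [hu0, smul_zero, zero_add, smul_eq_mul]
        exact mul_nonpos_of_nonneg_of_nonpos hb0 hut₀
  have hDanti : AntitoneOn (Df h) (Set.Ioo 0 t₀) := by
    apply antitoneOn_of_deriv_nonpos (convex_Ioo 0 t₀)
    · intro y hy
      exact (hasDerivAt_Df hh ⟨hy.1, hy.2.trans ht₀1⟩).continuousAt.continuousWithinAt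
    · intro y hy
      rw [interior_Ioo] at hy
      exact (hasDerivAt_Df hh ⟨hy.1, hy.2.trans ht₀1⟩).differentiableAt.differentiableWithinAt
    · intro y hy
      rw [interior_Ioo] at hy
      have hy01 : y ∈ Set.Ioo (0:ℝ) 1 := ⟨hy.1, hy.2.trans ht₀1⟩
      rw [(hasDerivAt_Df hh hy01).deriv]
      apply Df_deriv_nonpos hh hy01
      have := hleft y ⟨hy.1, hy.2.le⟩
      simp only [hu_def] at this
      linarith
  have hconc : ConcaveOn ℝ (Set.Icc 0 t₀) (Gf h) := by
    apply AntitoneOn.concaveOn_of_deriv (convex_Icc 0 t₀) (continuous_Gf hh.1.ne').continuousOn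
    · intro y hy
      rw [interior_Icc] at hy
      exact (hasDerivAt_Gf hh ⟨hy.1, hy.2.trans ht₀1⟩).differentiableAt.differentiableWithinAt
    · intro a ha b hb hab
      rw [interior_Icc] at ha hb
      rw [(hasDerivAt_Gf hh ⟨ha.1, ha.2.trans ht₀1⟩).deriv,
        (hasDerivAt_Gf hh ⟨hb.1, hb.2.trans ht₀1⟩).deriv]
      exact hDanti ha hb hab
  have hmin := hconc.min_le_of_mem_Icc (Set.left_mem_Icc.2 ht₀0.le)
    (Set.right_mem_Icc.2 ht₀0.le) ⟨ht.1, h1.le⟩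
  have hGt₀0 : 0 ≤ Gf h t₀ := hGt₀ t₀ ⟨le_rfl, ht₀h.le⟩
  calc (0:ℝ) ≤ min (Gf h 0) (Gf h t₀) := le_min hG0 hGt₀0
  _ ≤ Gf h t := hmin

lemma isProbabilityMeasure_stdGaussian (n : ℕ) : IsProbabilityMeasure (stdGaussian n) := by
  unfold _root_.stdGaussian
  exact Measure.isProbabilityMeasure_map (MeasurableEquiv.measurable _).aemeasurable

end EB

open EB in
theorem entropy_bound (n : ℕ) (h : ℝ) (hh0 : 0 < h) (hh1 : h ≤ 1)
    (f : EuclideanSpace ℝ (Fin n) → ℝ) (hf : Measurable f)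
    (hf01 : ∀ x, f x ∈ Set.Icc (0 : ℝ) 1)
    (hint : ∫ x, f x ∂stdGaussian n = h) :
    ∫ x, (f x / h) * Real.log (f x / h) ∂stdGaussian n
      ≤ h⁻¹ ^ 2 * ∫ x, (Q h - Q (f x)) ∂stdGaussian n := by
  set μ := stdGaussian n with hμ
  haveI : IsProbabilityMeasure μ := isProbabilityMeasure_stdGaussian n
  have hfae : AEStronglyMeasurable f μ := hf.aestronglyMeasurable
  have hintf : Integrable f μ := by
    apply Integrable.mono' (integrable_const (1:ℝ)) hfae
    refine Filter.Eventually.of_forall fun x => ?_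
    rw [Real.norm_eq_abs, abs_of_nonneg (hf01 x).1]
    exact (hf01 x).2
  have hQf_meas : AEStronglyMeasurable (fun x => Q (f x)) μ :=
    (measurable_Q.comp hf).aestronglyMeasurable
  have hintQf : Integrable (fun x => Q (f x)) μ := by
    apply Integrable.mono' (integrable_const (1/2 : ℝ)) hQf_meas
    refine Filter.Eventually.of_forall fun x => ?_
    rw [Real.norm_eq_abs, abs_of_nonneg (Q_nonneg _)]
    exact (Q_lt_half _).le
  rcases lt_or_eq_of_le hh1 with hh1' | rfl
  · -- main case h < 1
    have hhIoo : h ∈ Set.Ioo (0:ℝ) 1 := ⟨hh0, hh1'⟩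
    have hpt : ∀ x, (f x / h) * Real.log (f x / h) ≤
        h⁻¹ ^ 2 * (Q h - Q (f x)) + (1/h - h⁻¹ ^ 2 * Psi h) * (f x - h) := by
      intro x
      have hG := Gf_nonneg hhIoo (f x) (hf01 x)
      rw [Gf] at hG
      have e : (f x - h)/h = (1/h) * (f x - h) := by ring
      rw [e] at hG
      linarith
    have hcontL : Continuous (fun t : ℝ => (t/h) * Real.log (t/h)) :=
      Real.continuous_mul_log.comp (continuous_id.div_const h)
    obtain ⟨C, hC⟩ : ∃ C, ∀ t ∈ Set.Icc (0:ℝ) 1, ‖(t/h) * Real.log (t/h)‖ ≤ C :=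
      IsCompact.exists_bound_of_continuousOn isCompact_Icc hcontL.continuousOn
    have hintL : Integrable (fun x => (f x / h) * Real.log (f x / h)) μ := by
      apply Integrable.mono' (integrable_const C)
      · exact (hcontL.measurable.comp hf).aestronglyMeasurable
      · exact Filter.Eventually.of_forall fun x => hC (f x) (hf01 x)
    have hintR1 : Integrable (fun x => h⁻¹ ^ 2 * (Q h - Q (f x))) μ :=
      (((integrable_const (Q h)).sub hintQf).const_mul _)
    have hintR2 : Integrable (fun x => (1/h - h⁻¹ ^ 2 * Psi h) * (f x - h)) μ :=
      ((hintf.sub (integrable_const h)).const_mul _)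
    calc ∫ x, (f x / h) * Real.log (f x / h) ∂μ
        ≤ ∫ x, (h⁻¹ ^ 2 * (Q h - Q (f x)) + (1/h - h⁻¹ ^ 2 * Psi h) * (f x - h)) ∂μ :=
          integral_mono hintL (hintR1.add hintR2) hpt
      _ = h⁻¹ ^ 2 * (∫ x, (Q h - Q (f x)) ∂μ)
          + (1/h - h⁻¹ ^ 2 * Psi h) * (∫ x, (f x - h) ∂μ) := by
          rw [integral_add hintR1 hintR2, integral_const_mul, integral_const_mul]
      _ = h⁻¹ ^ 2 * ∫ x, (Q h - Q (f x)) ∂μ := by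
          have hz : ∫ x, (f x - h) ∂μ = 0 := by
            rw [integral_sub hintf (integrable_const h), hint, integral_const]
            simp
          rw [hz, mul_zero, add_zero]
  · -- case h = 1
    have hone : ∫ x, (1 - f x) ∂μ = 0 := by
      rw [integral_sub (integrable_const 1) hintf, hint, integral_const]
      simp
    have hae : ∀ᵐ x ∂μ, 1 - f x = 0 := by
      have hnn : 0 ≤ᵐ[μ] fun x => 1 - f x :=
        Filter.Eventually.of_forall fun x => by
          show (0:ℝ) ≤ 1 - f x
          linarith [(hf01 x).2]
      exact (integral_eq_zero_iff_of_nonneg_ae hnn ((integrable_const 1).sub hintf)).1 hone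
    have hLHS : ∫ x, (f x / 1) * Real.log (f x / 1) ∂μ = 0 := by
      rw [integral_congr_ae (g := fun _ => (0:ℝ))]
      · exact integral_zero _ _
      · filter_upwards [hae] with x hx
        have : f x = 1 := by linarith
        simp [this]
    have hRHS : ∫ x, (Q 1 - Q (f x)) ∂μ = 0 := by
      rw [integral_congr_ae (g := fun _ => (0:ℝ))]
      · exact integral_zero _ _
      · filter_upwards [hae] with x hx
        have : f x = 1 := by linarith
        simp [this, Q_one]
    rw [hLHS, hRHS]
    simp
end
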